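/- The Eulerian polynomials satisfy the quadratic recurrence A_{n+1}(t) = (1+t) A_n(t) + t ∑_{k=1}^{n-1} C(n,k) A_{n-k}(t) A_k(t) for all n ≥ 1. -/
import Mathlib


open Finset

/-- A permutation of `Fin n` viewed as a function `ℕ → ℕ` (0-based), identity outside. -/
def pf {n : ℕ} (π : Equiv.Perm (Fin n)) (i : ℕ) : ℕ :=
  if h : i < n then (π ⟨i, h⟩ : ℕ) else i

/-- Number of descents. -/
def desN {n : ℕ} (π : Equiv.Perm (Fin n)) : ℕ :=
  ((range (n - 1)).filter (fun i => pf π (i + 1) < pf π i)).card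

/-- Number of inversions. -/
def invN {n : ℕ} (π : Equiv.Perm (Fin n)) : ℕ :=
  (((range n) ×ˢ (range n)).filter (fun p => p.1 < p.2 ∧ pf π p.2 < pf π p.1)).card

/-- Number of excedances. -/
def excN {n : ℕ} (π : Equiv.Perm (Fin n)) : ℕ :=
  ((range n).filter (fun i => i < pf π i)).card

/-- Major index. -/
def majN {n : ℕ} (π : Equiv.Perm (Fin n)) : ℕ :=
  ∑ i ∈ (range (n - 1)).filter (fun i => pf π (i + 1) < pf π i), (i + 1)

/-- Number of admissible inversions. -/
def aiN {n : ℕ} (π : Equiv.Perm (Fin n)) : ℕ :=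
  (((range n) ×ˢ (range n)).filter (fun p => p.1 < p.2 ∧ pf π p.2 < pf π p.1 ∧
    ((0 < p.1 ∧ pf π (p.1 - 1) < pf π p.1) ∨ ∃ k < p.2, p.1 < k ∧ pf π p.1 < pf π k))).card

/-- The classical Eulerian polynomial `A_n(t) = ∑_{π ∈ S_n} t^{des π}`. -/
def eulerPoly (R : Type*) [CommRing R] (n : ℕ) (t : R) : R :=
  ∑ π : Equiv.Perm (Fin n), t ^ desN π

/-- The (maj, exc) q-Eulerian polynomial `A_n(t,q)`. -/
def Aq (R : Type*) [CommRing R] (n : ℕ) (t q : R) : R :=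
  ∑ π : Equiv.Perm (Fin n), t ^ excN π * q ^ (majN π - excN π)

/-- The Gaussian binomial coefficient (as a value at `q`), via the q-Pascal recurrence. -/
def gaussR {R : Type*} [CommRing R] (q : R) : ℕ → ℕ → R
  | _, 0 => 1
  | 0, _ + 1 => 0
  | n + 1, k + 1 => gaussR q n k + q ^ (k + 1) * gaussR q n (k + 1)

/-- The q-binomial-Eulerian polynomial `Ã_n(t,q)`. -/
def Atilde (R : Type*) [CommRing R] (n : ℕ) (t q : R) : R :=
  1 + t * ∑ m ∈ Icc 1 n, gaussR q n m * Aq R m t q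

/-- Membership in PRW: if the permutation has an ascent, then the first ascent
carries the smallest letter. -/
def isPRW {n : ℕ} (π : Equiv.Perm (Fin n)) : Prop :=
  ∀ i < n, i + 1 < n → pf π i < pf π (i + 1) →
    (∀ j < i, ¬ pf π j < pf π (j + 1)) → pf π i = 0

instance {n : ℕ} : DecidablePred (isPRW (n := n)) := fun _ => by
  unfold isPRW; infer_instance

/-- 1-based entries with boundary convention `σ₀ = σ_{n+1} = +∞` (encoded as `n`). -/
def extv {n : ℕ} (π : Equiv.Perm (Fin n)) (i : ℕ) : ℕ :=
  if 1 ≤ i ∧ i ≤ n then pf π (i - 1) else n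

/-- Number of non-initial double descents. -/
def ddN {n : ℕ} (π : Equiv.Perm (Fin n)) : ℕ :=
  ((Icc 2 n).filter (fun i => extv π (i + 1) < extv π i ∧ extv π i < extv π (i - 1))).card

namespace EulerAux

open Equiv

variable {n : ℕ}

lemma pf_def (τ : Equiv.Perm (Fin n)) {i : ℕ} (h : i < n) : pf τ i = τ ⟨i, h⟩ := dif_pos h

lemma pf_lt_of_lt (τ : Equiv.Perm (Fin n)) {i : ℕ} (h : i < n) : pf τ i < n := by
  rw [pf_def τ h]; exact (τ ⟨i, h⟩).isLt

lemma pf_of_le (τ : Equiv.Perm (Fin n)) {i : ℕ} (h : n ≤ i) : pf τ i = i := dif_neg (by omega)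

lemma desN_le (τ : Equiv.Perm (Fin n)) : desN τ ≤ n - 1 :=
  le_trans (card_filter_le _ _) (by simp)

lemma castSucc_ne_last (a : Fin n) : a.castSucc ≠ Fin.last n :=
  Fin.ne_of_lt (Fin.castSucc_lt_last a)

/-- insert the value `n` at position `p` -/
def Ff (p : Fin (n+1)) (τ : Equiv.Perm (Fin n)) : Fin (n+1) → Fin (n+1) := fun i =>
  if h : i.val < p.val then (τ ⟨i.val, by have := p.isLt; omega⟩).castSucc
  else if h' : i.val = p.val then Fin.last n
  else (τ ⟨i.val - 1, by have := i.isLt; omega⟩).castSucc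

lemma Ff_injective (p : Fin (n+1)) (τ : Equiv.Perm (Fin n)) : Function.Injective (Ff p τ) := by
  intro i j h
  have hi := i.isLt; have hj := j.isLt; have hp := p.isLt
  unfold Ff at h
  split_ifs at h <;>
    first
    | (exact absurd h (castSucc_ne_last _))
    | (exact absurd h.symm (castSucc_ne_last _))
    | (exact Fin.ext (by omega))
    | (rw [Fin.castSucc_inj] at h;
       have h2 := τ.injective h; simp only [Fin.mk.injEq] at h2;
       exact Fin.ext (by omega))

noncomputable def Fp (p : Fin (n+1)) (τ : Equiv.Perm (Fin n)) : Equiv.Perm (Fin (n+1)) :=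
  Equiv.ofBijective _ (Finite.injective_iff_bijective.mp (Ff_injective p τ))

lemma Fp_apply (p : Fin (n+1)) (τ : Equiv.Perm (Fin n)) (i : Fin (n+1)) :
    Fp p τ i = Ff p τ i := rfl

lemma pf_Fp (p : Fin (n+1)) (τ : Equiv.Perm (Fin n)) (j : ℕ) :
    pf (Fp p τ) j = if j < p.val then pf τ j else if j = p.val then n
      else if j ≤ n then pf τ (j - 1) else j := by
  have hp := p.isLt
  by_cases hj : j < n + 1
  · have hL : pf (Fp p τ) j = ((Ff p τ ⟨j, hj⟩ : Fin (n+1)) : ℕ) := dif_pos hj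
    rw [hL]; unfold Ff
    by_cases h1 : j < p.val
    · rw [dif_pos h1, if_pos h1, pf_def τ (show j < n by omega)]
      simp
    · rw [dif_neg h1, if_neg h1]
      by_cases h2 : j = p.val
      · rw [dif_pos h2, if_pos h2]; simp
      · rw [dif_neg h2, if_neg h2, if_pos (by omega), pf_def τ (show j - 1 < n by omega)]
        simp
  · rw [show pf (Fp p τ) j = j from dif_neg (by omega), if_neg (by omega), if_neg (by omega),
      if_neg (by omega)]

end EulerAux

namespace EulerAux
variable {n : ℕ}

lemma desN_Fp (p : Fin (n+1)) (τ : Equiv.Perm (Fin n)) :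
    desN (Fp p τ) =
      if (1 ≤ p.val ∧ pf τ p.val < pf τ (p.val - 1)) ∨ p.val = n then desN τ
      else desN τ + 1 := by
  have hp : p.val ≤ n := by have := p.isLt; omega
  set k := p.val with hk
  have hA : desN (Fp p τ) = ((range n).filter
      (fun i => pf (Fp p τ) (i+1) < pf (Fp p τ) i)).card := by
    unfold desN; norm_num
  set B := (range (n-1)).filter (fun j => pf τ (j+1) < pf τ j) with hB
  have hdτ : desN τ = B.card := rfl
  set ψ : ℕ → ℕ := fun j => if j < k then j else j + 1 with hψ
  have hψinj : Function.Injective ψ := by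
    intro a b hab; simp only [hψ] at hab; split_ifs at hab <;> omega
  set B' := B.filter (fun j => ¬ j + 1 = k) with hB'
  set C1 := (range n).filter (fun i => i = k) with hC1
  have hset : (range n).filter (fun i => pf (Fp p τ) (i+1) < pf (Fp p τ) i) =
      C1 ∪ B'.image ψ := by
    ext i
    simp only [hC1, hB', hB, hψ, mem_union, mem_filter, mem_range, mem_image]
    constructor
    · rintro ⟨hin, hdesc⟩
      rw [pf_Fp, pf_Fp] at hdesc
      by_cases c1 : i + 1 < k
      · right
        refine ⟨i, ⟨⟨by omega, ?_⟩, by omega⟩, by rw [if_pos (show i < k by omega)]⟩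
        rwa [if_pos (show i + 1 < p.val by omega), if_pos (show i < p.val by omega)] at hdesc
      · by_cases c2 : i + 1 = k
        · exfalso
          rw [if_neg (show ¬ i + 1 < p.val by omega), if_pos (show i + 1 = p.val by omega),
            if_pos (show i < p.val by omega)] at hdesc
          have := pf_lt_of_lt τ (show i < n by omega)
          omega
        · by_cases c3 : i = k
          · left; exact ⟨hin, c3⟩
          · right
            refine ⟨i - 1, ⟨⟨by omega, ?_⟩, by omega⟩, ?_⟩
            · rw [if_neg (show ¬ i + 1 < p.val by omega), if_neg (show ¬ i + 1 = p.val by omega),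
                if_pos (show i + 1 ≤ n by omega), if_neg (show ¬ i < p.val by omega),
                if_neg (show ¬ i = p.val by omega), if_pos (show i ≤ n by omega)] at hdesc
              have e1 : i - 1 + 1 = i := by omega
              have e2 : i + 1 - 1 = i := by omega
              rw [e1]; rwa [e2] at hdesc
            · rw [if_neg (show ¬ i - 1 < k by omega)]; omega
    · rintro (⟨hin, hik⟩ | ⟨j, ⟨⟨hjn, hjd⟩, hjk⟩, hji⟩)
      · refine ⟨hin, ?_⟩
        rw [pf_Fp, pf_Fp, if_neg (show ¬ i + 1 < p.val by omega),
          if_neg (show ¬ i + 1 = p.val by omega), if_pos (show i + 1 ≤ n by omega),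
          if_neg (show ¬ i < p.val by omega), if_pos (show i = p.val by omega)]
        have e2 : i + 1 - 1 = i := by omega
        rw [e2]
        exact pf_lt_of_lt τ (by omega)
      · by_cases hc : j < k
        · have hij : i = j := by rw [← hji, if_pos hc]
          subst hij
          refine ⟨by omega, ?_⟩
          rw [pf_Fp, pf_Fp, if_pos (show i + 1 < p.val by omega), if_pos (show i < p.val by omega)]
          exact hjd
        · have hij : i = j + 1 := by rw [← hji, if_neg hc]
          subst hij
          refine ⟨by omega, ?_⟩
          rw [pf_Fp, pf_Fp, if_neg (show ¬ j + 1 + 1 < p.val by omega),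
            if_neg (show ¬ j + 1 + 1 = p.val by omega), if_pos (show j + 1 + 1 ≤ n by omega),
            if_neg (show ¬ j + 1 < p.val by omega), if_neg (show ¬ j + 1 = p.val by omega),
            if_pos (show j + 1 ≤ n by omega)]
          have e1 : j + 1 + 1 - 1 = j + 1 := by omega
          have e2 : j + 1 - 1 = j := by omega
          rw [e1, e2]
          exact hjd
  have hdisj : Disjoint C1 (B'.image ψ) := by
    rw [disjoint_left]
    rintro a ha hb
    simp only [hC1, mem_filter, mem_range] at ha
    simp only [mem_image, hB', hB, hψ, mem_filter, mem_range] at hb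
    obtain ⟨j, ⟨⟨hj1, hj2⟩, hj3⟩, hj4⟩ := hb
    split_ifs at hj4 <;> omega
  have hcard : desN (Fp p τ) = C1.card + B'.card := by
    rw [hA, hset, card_union_of_disjoint hdisj, card_image_of_injective _ hψinj]
  have hsplit : (B.filter (fun j => j + 1 = k)).card + B'.card = B.card := by
    rw [hB']
    exact card_filter_add_card_filter_not (s := B) (p := fun j => j + 1 = k)
  by_cases hkn : k = n
  · have hC1e : C1.card = 0 := by
      rw [hC1, filter_eq', if_neg (by simp only [mem_range]; omega)]; simp
    have hBe : (B.filter (fun j => j + 1 = k)).card = 0 := by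
      rw [card_eq_zero]
      ext j
      simp only [hB, mem_filter, mem_range, notMem_empty, iff_false]
      rintro ⟨⟨hj1, _⟩, hj2⟩
      omega
    rw [if_pos (Or.inr hkn), hcard, hdτ]
    omega
  · have hkn' : k < n := by omega
    have hC1c : C1.card = 1 := by
      rw [hC1, filter_eq', if_pos (by simp only [mem_range]; omega)]; simp
    by_cases hdk : 1 ≤ k ∧ pf τ k < pf τ (k - 1)
    · have hBk : (B.filter (fun j => j + 1 = k)).card = 1 := by
        have : B.filter (fun j => j + 1 = k) = {k - 1} := by
          ext j
          simp only [hB, mem_filter, mem_range, mem_singleton]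
          constructor
          · rintro ⟨_, hj2⟩; omega
          · rintro rfl
            refine ⟨⟨by omega, ?_⟩, by omega⟩
            have e : k - 1 + 1 = k := by omega
            rw [e]; exact hdk.2
        rw [this]; simp
      rw [if_pos (Or.inl hdk), hcard, hdτ]
      omega
    · have hBe : (B.filter (fun j => j + 1 = k)).card = 0 := by
        rw [card_eq_zero]
        ext j
        simp only [hB, mem_filter, mem_range, notMem_empty, iff_false]
        rintro ⟨⟨hj1, hj2⟩, hj3⟩
        apply hdk
        refine ⟨by omega, ?_⟩
        have : j = k - 1 := by omega
        subst this
        rwa [show k - 1 + 1 = k by omega] at hj2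
      rw [if_neg (by rintro (h | h); exacts [hdk h, hkn h]), hcard, hdτ]
      omega

end EulerAux

namespace EulerAux
variable {n : ℕ}

noncomputable def bigF : Fin (n+1) × Equiv.Perm (Fin n) → Equiv.Perm (Fin (n+1)) :=
  fun x => Fp x.1 x.2

lemma Fp_at_p (p : Fin (n+1)) (τ : Equiv.Perm (Fin n)) : Fp p τ p = Fin.last n := by
  rw [Fp_apply]; unfold Ff
  rw [dif_neg (lt_irrefl _), dif_pos rfl]

lemma bigF_injective : Function.Injective (bigF (n := n)) := by
  rintro ⟨p, τ⟩ ⟨q, σ⟩ h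
  simp only [bigF] at h
  have hpq : p = q := by
    have h1 : Fp p τ p = Fin.last n := Fp_at_p p τ
    have h2 : Fp q σ p = Fin.last n := by rw [← h]; exact h1
    by_contra hne
    rw [Fp_apply] at h2
    unfold Ff at h2
    by_cases hc : p.val < q.val
    · rw [dif_pos hc] at h2; exact castSucc_ne_last _ h2
    · rw [dif_neg hc, dif_neg (fun he => hne (Fin.ext he))] at h2
      exact castSucc_ne_last _ h2
  subst hpq
  have hτσ : τ = σ := by
    apply Equiv.ext
    intro a
    have ha := a.isLt
    by_cases hc : a.val < p.val
    · have e1 : Fp p τ a.castSucc = (τ a).castSucc := by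
        rw [Fp_apply]; unfold Ff
        rw [dif_pos (by simpa using hc)]
        congr 1
      have e2 : Fp p σ a.castSucc = (σ a).castSucc := by
        rw [Fp_apply]; unfold Ff
        rw [dif_pos (by simpa using hc)]
        congr 1
      rw [← Fin.castSucc_inj, ← e1, ← e2, h]
    · have hp := p.isLt
      have e1 : Fp p τ a.succ = (τ a).castSucc := by
        rw [Fp_apply]; unfold Ff
        rw [dif_neg (by simp only [Fin.val_succ]; omega),
          dif_neg (by simp only [Fin.val_succ]; omega)]
        congr 1
        try simp
      have e2 : Fp p σ a.succ = (σ a).castSucc := by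
        rw [Fp_apply]; unfold Ff
        rw [dif_neg (by simp only [Fin.val_succ]; omega),
          dif_neg (by simp only [Fin.val_succ]; omega)]
        congr 1
        try simp
      rw [← Fin.castSucc_inj, ← e1, ← e2, h]
  rw [hτσ]

lemma bigF_bijective : Function.Bijective (bigF (n := n)) := by
  rw [Fintype.bijective_iff_injective_and_card]
  refine ⟨bigF_injective, ?_⟩
  simp [Fintype.card_perm, Nat.factorial_succ]

lemma count_sum {R : Type*} [CommRing R] (t : R) (τ : Equiv.Perm (Fin n)) :
    ∑ p : Fin (n+1), t ^ desN (Fp p τ) =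
      ((desN τ + 1 : ℕ) : R) * t ^ desN τ + ((n - desN τ : ℕ) : R) * t ^ (desN τ + 1) := by
  have hdn : desN τ ≤ n := le_trans (desN_le τ) (by omega)
  calc ∑ p : Fin (n+1), t ^ desN (Fp p τ)
      = ∑ p : Fin (n+1), (fun k : ℕ => if (1 ≤ k ∧ pf τ k < pf τ (k - 1)) ∨ k = n
          then t ^ desN τ else t ^ (desN τ + 1)) p.val :=
        Finset.sum_congr rfl (fun p _ => by
          rw [desN_Fp]
          by_cases h : (1 ≤ p.val ∧ pf τ p.val < pf τ (p.val - 1)) ∨ p.val = n <;> simp [h])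
    _ = ∑ k ∈ range (n+1), (if (1 ≤ k ∧ pf τ k < pf τ (k - 1)) ∨ k = n
          then t ^ desN τ else t ^ (desN τ + 1)) :=
        Fin.sum_univ_eq_sum_range (fun k => if (1 ≤ k ∧ pf τ k < pf τ (k - 1)) ∨ k = n
          then t ^ desN τ else t ^ (desN τ + 1)) (n+1)
    _ = ((desN τ + 1 : ℕ) : R) * t ^ desN τ + ((n - desN τ : ℕ) : R) * t ^ (desN τ + 1) := by
      rw [Finset.sum_ite]
      have hPcard : ((range (n+1)).filter
          (fun k => (1 ≤ k ∧ pf τ k < pf τ (k - 1)) ∨ k = n)).card = desN τ + 1 := by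
        have hPset : (range (n+1)).filter (fun k => (1 ≤ k ∧ pf τ k < pf τ (k - 1)) ∨ k = n)
            = insert n
            (((range (n-1)).filter (fun j => pf τ (j+1) < pf τ j)).image (fun j => j + 1)) := by
          ext m
          simp only [mem_filter, mem_range, mem_insert, mem_image]
          constructor
          · rintro ⟨hm, (⟨h1, h2⟩ | rfl)⟩
            · by_cases hmn : m = n
              · exfalso
                rw [hmn, pf_of_le τ (le_refl n)] at h2
                have := pf_lt_of_lt τ (show n - 1 < n by omega)
                omega
              · right
                refine ⟨m - 1, ⟨by omega, ?_⟩, by omega⟩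
                rwa [show m - 1 + 1 = m by omega]
            · left; rfl
          · rintro (rfl | ⟨j, ⟨hj1, hj2⟩, rfl⟩)
            · exact ⟨by omega, Or.inr rfl⟩
            · refine ⟨by omega, Or.inl ⟨by omega, ?_⟩⟩
              rwa [show j + 1 - 1 = j by omega]
        rw [hPset, card_insert_of_notMem, card_image_of_injective _ (add_left_injective 1)]
        · rfl
        · simp only [mem_image, mem_filter, mem_range]
          rintro ⟨j, ⟨hj1, _⟩, hj2⟩
          omega
      have hNcard : ((range (n+1)).filter
          (fun k => ¬ ((1 ≤ k ∧ pf τ k < pf τ (k - 1)) ∨ k = n))).card = n - desN τ := by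
        have := card_filter_add_card_filter_not (s := range (n+1))
          (p := fun k => (1 ≤ k ∧ pf τ k < pf τ (k - 1)) ∨ k = n)
        rw [card_range] at this
        omega
      rw [sum_const, sum_const, hPcard, hNcard, nsmul_eq_mul, nsmul_eq_mul]

lemma euler_ins {R : Type*} [CommRing R] (t : R) (n : ℕ) :
    eulerPoly R (n+1) t = ∑ τ : Equiv.Perm (Fin n),
      (((desN τ + 1 : ℕ) : R) * t ^ desN τ + ((n - desN τ : ℕ) : R) * t ^ (desN τ + 1)) := by
  unfold eulerPoly
  rw [← Fintype.sum_bijective bigF bigF_bijective _ _ (fun x => rfl), Fintype.sum_prod_type]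
  rw [Finset.sum_comm]
  exact Finset.sum_congr rfl (fun τ _ => count_sum t τ)

end EulerAux

namespace EulerAux
open Polynomial

noncomputable def Ep (m : ℕ) : Polynomial ℤ := eulerPoly (Polynomial ℤ) m X

lemma Ep_def (m : ℕ) : Ep m = ∑ τ : Equiv.Perm (Fin m), (X : ℤ[X]) ^ desN τ := rfl

lemma Ep_one : Ep 1 = 1 := by
  rw [Ep_def]
  have h : ∀ τ : Equiv.Perm (Fin 1), desN τ = 0 := fun τ => by
    unfold desN; simp
  simp only [h, pow_zero]
  rw [Finset.sum_const, Finset.card_univ]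
  simp [Fintype.card_perm]

lemma Ep_DE (m : ℕ) :
    Ep (m+1) = (1 + (m : ℤ[X]) * X) * Ep m + X * (1 - X) * derivative (Ep m) := by
  have h := euler_ins (R := ℤ[X]) X m
  rw [show Ep (m+1) = eulerPoly ℤ[X] (m+1) X from rfl, h, Ep_def, derivative_sum,
    Finset.mul_sum, Finset.mul_sum, ← Finset.sum_add_distrib]
  refine Finset.sum_congr rfl (fun τ _ => ?_)
  rw [derivative_X_pow]
  have hd : desN τ ≤ m := le_trans (desN_le τ) (by omega)
  rcases Nat.eq_zero_or_pos (desN τ) with h0 | h1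
  · rw [h0]
    simp
  · obtain ⟨e, he⟩ : ∃ e, desN τ = e + 1 := ⟨desN τ - 1, by omega⟩
    rw [he] at hd ⊢
    rw [Nat.cast_sub (by omega), Nat.add_sub_cancel, Polynomial.C_eq_natCast]
    push_cast
    ring

lemma Ep_rec : ∀ n : ℕ, 1 ≤ n → Ep (n+1) = (1 + X) * Ep n +
    X * ∑ k ∈ Icc 1 (n-1), ((n.choose k : ℤ[X]) * Ep (n-k) * Ep k) := by
  intro n hn
  induction n, hn using Nat.le_induction with
  | base =>
    have h := Ep_DE 1
    rw [Ep_one] at h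
    rw [h, Ep_one, show (1:ℕ) - 1 = 0 from rfl, Finset.Icc_eq_empty (by norm_num), sum_empty]
    simp
  | succ n hn IH =>
    obtain ⟨m, rfl⟩ : ∃ m, n = m + 1 := ⟨n - 1, by omega⟩
    simp only [Nat.add_sub_cancel] at IH ⊢
    set S := ∑ k ∈ Icc 1 m, (((m+1).choose k : ℤ[X]) * Ep (m+1-k) * Ep k) with hS
    set T := ∑ k ∈ Icc 1 (m+1), (((m+1+1).choose k : ℤ[X]) * Ep (m+1+1-k) * Ep k) with hT
    set U := ∑ k ∈ Icc 1 m, (((m+1).choose k : ℤ[X]) *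
      (Ep (m+1+1-k) * Ep k + Ep (m+1-k) * Ep (k+1))) with hU
    have hdS : derivative S = ∑ k ∈ Icc 1 m, (((m+1).choose k : ℤ[X]) *
        (derivative (Ep (m+1-k)) * Ep k + Ep (m+1-k) * derivative (Ep k))) := by
      rw [hS, derivative_sum]
      refine Finset.sum_congr rfl fun k _ => ?_
      rw [derivative_mul, derivative_mul, derivative_natCast]
      ring
    have hterm : ∀ k ∈ Icc 1 m, X * (1-X) * (((m+1).choose k : ℤ[X]) *
        (derivative (Ep (m+1-k)) * Ep k + Ep (m+1-k) * derivative (Ep k)))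
        = ((m+1).choose k : ℤ[X]) * (Ep (m+1+1-k) * Ep k + Ep (m+1-k) * Ep (k+1))
          - (2 + ((m+1 : ℕ) : ℤ[X]) * X) * (((m+1).choose k : ℤ[X]) * Ep (m+1-k) * Ep k) := by
      intro k hk
      rw [mem_Icc] at hk
      have h3a := Ep_DE (m+1-k)
      have h3b := Ep_DE k
      rw [show m+1-k+1 = m+1+1-k by omega,
        Nat.cast_sub (show k ≤ m+1 by omega)] at h3a
      linear_combination (-((m+1).choose k : ℤ[X]) * Ep k) * h3a
        + (-((m+1).choose k : ℤ[X]) * Ep (m+1-k)) * h3b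
    have h4 : X * (1-X) * derivative S = U - (2 + ((m+1 : ℕ) : ℤ[X]) * X) * S := by
      rw [hdS, Finset.mul_sum, hU, hS, Finset.mul_sum, ← Finset.sum_sub_distrib]
      exact Finset.sum_congr rfl hterm
    have hTsplit : T = ∑ i ∈ range m, ((((m+1).choose (i+1) : ℤ[X]) * Ep (m+1-i) * Ep (i+1))
        + (((m+1).choose (i+1) : ℤ[X]) * Ep (m-i) * Ep (i+2))) + 2 * Ep (m+1) := by
      rw [hT, ← Finset.Ico_add_one_right_eq_Icc, Finset.sum_Ico_eq_sum_range]
      show ∑ i ∈ range (m+1), (((m+1+1).choose (1+i) : ℤ[X]) * Ep (m+1+1-(1+i)) * Ep (1+i)) = _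
      have eq1 : ∀ i ∈ range (m+1), (((m+1+1).choose (1+i) : ℤ[X]) * Ep (m+1+1-(1+i)) * Ep (1+i))
          = ((m+1).choose i : ℤ[X]) * Ep (m+1-i) * Ep (i+1)
            + ((m+1).choose (i+1) : ℤ[X]) * Ep (m+1-i) * Ep (i+1) := by
        intro i hi
        rw [mem_range] at hi
        rw [show 1+i = i+1 by omega, show m+1+1-(i+1) = m+1-i by omega, Nat.choose_succ_succ]
        push_cast
        ring
      rw [Finset.sum_congr rfl eq1, Finset.sum_add_distrib, Finset.sum_range_succ',
        Finset.sum_range_succ]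
      have eq2 : ∀ i ∈ range m, ((m+1).choose (i+1) : ℤ[X]) * Ep (m+1-(i+1)) * Ep ((i+1)+1)
          = ((m+1).choose (i+1) : ℤ[X]) * Ep (m-i) * Ep (i+2) := by
        intro i hi
        rw [show m+1-(i+1) = m-i by omega, show (i+1)+1 = i+2 by omega]
      rw [Finset.sum_congr rfl eq2]
      rw [show (m+1).choose 0 = 1 by simp, show m+1-0 = m+1 by omega,
        show (m+1).choose (m+1) = 1 by simp, show m+1-m = 1 by omega, Ep_one]
      push_cast
      rw [Finset.sum_add_distrib]
      ring
    have hUsplit : U = ∑ i ∈ range m, ((((m+1).choose (i+1) : ℤ[X]) * Ep (m+1-i) * Ep (i+1))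
        + (((m+1).choose (i+1) : ℤ[X]) * Ep (m-i) * Ep (i+2))) := by
      rw [hU, ← Finset.Ico_add_one_right_eq_Icc, Finset.sum_Ico_eq_sum_range]
      show ∑ i ∈ range m, (((m+1).choose (1+i) : ℤ[X]) *
        (Ep (m+1+1-(1+i)) * Ep (1+i) + Ep (m+1-(1+i)) * Ep ((1+i)+1))) = _
      refine Finset.sum_congr rfl fun i hi => ?_
      rw [mem_range] at hi
      rw [show 1+i = i+1 by omega, show m+1+1-(i+1) = m+1-i by omega,
        show m+1-(i+1) = m-i by omega, show (i+1)+1 = i+2 by omega]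
      ring
    have h5 : U = T - 2 * Ep (m+1) := by
      rw [hUsplit, hTsplit]
      ring
    have h6 : Ep (m+1+1) = (1+X) * Ep (m+1) + X * S := IH
    have h1 := Ep_DE (m+1+1)
    have h3 := Ep_DE (m+1)
    have h2 : derivative (Ep (m+1+1)) = Ep (m+1) + (1+X) * derivative (Ep (m+1)) + S
        + X * derivative S := by
      rw [h6, derivative_add, derivative_mul, derivative_mul, derivative_add, derivative_one,
        derivative_X]
      ring
    push_cast at h1 h3 h4
    linear_combination h1 + (X*(1-X)) * h2 - (1+X) * h3 + X * h4 + X * h5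
      + (1 + ((m : ℤ[X]) + 2) * X) * h6

end EulerAux

namespace EulerAux

lemma eulerPoly_eq_eval {R : Type*} [CommRing R] (t : R) (m : ℕ) :
    eulerPoly R m t = Polynomial.eval₂ (Int.castRingHom R) t (Ep m) := by
  rw [Ep_def]
  unfold eulerPoly
  rw [Polynomial.eval₂_finset_sum]
  refine Finset.sum_congr rfl fun τ _ => ?_
  simp

end EulerAux


/-- the quadratic recurrence for the Eulerian polynomials. -/
theorem stmt4 {R : Type*} [CommRing R] (t : R) (n : ℕ) (hn : 1 ≤ n) :
    eulerPoly R (n + 1) t =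
      (1 + t) * eulerPoly R n t +
        t * ∑ k ∈ Icc 1 (n - 1), (n.choose k : R) * eulerPoly R (n - k) t * eulerPoly R k t := by
  calc eulerPoly R (n+1) t = Polynomial.eval₂ (Int.castRingHom R) t (EulerAux.Ep (n+1)) :=
        EulerAux.eulerPoly_eq_eval t (n+1)
    _ = Polynomial.eval₂ (Int.castRingHom R) t ((1 + Polynomial.X) * EulerAux.Ep n +
        Polynomial.X * ∑ k ∈ Icc 1 (n-1),
          ((n.choose k : Polynomial ℤ) * EulerAux.Ep (n-k) * EulerAux.Ep k)) := by
        rw [EulerAux.Ep_rec n hn]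
    _ = (1 + t) * eulerPoly R n t +
        t * ∑ k ∈ Icc 1 (n - 1), (n.choose k : R) * eulerPoly R (n - k) t * eulerPoly R k t := by
        simp only [Polynomial.eval₂_add, Polynomial.eval₂_mul, Polynomial.eval₂_one,
          Polynomial.eval₂_X, Polynomial.eval₂_finset_sum, Polynomial.eval₂_natCast,
          ← EulerAux.eulerPoly_eq_eval]
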